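/- arXiv:1704.07247 — 8 statements merged into one kernel-verified Lean document; each statement's English description precedes it below -/
import Mathlib

section
/- Let 0 < α, β ≤ 1 with 1 < α + β ≤ 2, a < b, and let G(t,r) = (1/(Γ(α)Γ(β))) ∫_a^{min(t,r)} (t-s)^{β-1}(r-s)^{α-1} ds. Then for every fixed r ∈ [a,b], max over t ∈ [a,b] of G(t,r) equals G(r,r) = (r-a)^{α+β-1} / ((α+β-1) Γ(α) Γ(β)). -/
open Real MeasureTheory Set

noncomputable def G (a α β t r : ℝ) : ℝ :=
  (1 / (Real.Gamma α * Real.Gamma β)) *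
    ∫ s in a..(min t r), (t - s) ^ (β - 1) * (r - s) ^ (α - 1)

private lemma combine_rpow {α β : ℝ} (hα1 : α ≤ 1) (hβ1 : β ≤ 1) {x : ℝ} (hx : 0 ≤ x) :
    x ^ (β - 1) * x ^ (α - 1) = x ^ (α + β - 2) := by
  rcases hx.eq_or_lt with h | h
  · subst h
    by_cases ha : α = 1 <;> by_cases hb : β = 1
    · norm_num [ha, hb]
    · have h1 : β - 1 ≠ 0 := sub_ne_zero.mpr hb
      have h2 : α + β - 2 ≠ 0 := by
        intro hc; apply hb; linarith [sub_eq_zero.mp hc, ha]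
      simp [Real.zero_rpow h1, Real.zero_rpow h2]
    · have h1 : α - 1 ≠ 0 := sub_ne_zero.mpr ha
      have h2 : α + β - 2 ≠ 0 := by
        intro hc; apply ha; linarith
      simp [Real.zero_rpow h1, Real.zero_rpow h2]
    · have h1 : β - 1 ≠ 0 := sub_ne_zero.mpr hb
      have h2 : α + β - 2 ≠ 0 := by
        intro hc; apply ha; linarith
      simp [Real.zero_rpow h1, Real.zero_rpow h2]
  · rw [← Real.rpow_add h]; ring_nf

private lemma int_rpow_sub {γ : ℝ} (hγ : -1 < γ) (a m : ℝ) :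
    (∫ s in a..m, (m - s) ^ γ) = (m - a) ^ (γ + 1) / (γ + 1) := by
  have h := intervalIntegral.integral_comp_sub_left (a := a) (b := m)
    (fun u => u ^ γ) m
  rw [h, sub_self, integral_rpow (Or.inl hγ), Real.zero_rpow (by linarith), sub_zero]

theorem stmt_1 (a b α β : ℝ) (hα0 : 0 < α) (hα1 : α ≤ 1) (hβ0 : 0 < β) (hβ1 : β ≤ 1)
    (hs1 : 1 < α + β) (hs2 : α + β ≤ 2) (hab : a < b) (r : ℝ) (hr : r ∈ Icc a b) :
    IsMaxOn (fun t => G a α β t r) (Icc a b) r ∧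
      G a α β r r = (r - a) ^ (α + β - 1) / ((α + β - 1) * Real.Gamma α * Real.Gamma β) := by
  have hγ : (-1 : ℝ) < α + β - 2 := by linarith
  have hσ : (0:ℝ) < α + β - 1 := by linarith
  have hΓα : 0 < Real.Gamma α := Real.Gamma_pos_of_pos hα0
  have hΓβ : 0 < Real.Gamma β := Real.Gamma_pos_of_pos hβ0
  have har : a ≤ r := hr.1
  -- value of G at (r, r)
  have hval : G a α β r r =
      (1 / (Real.Gamma α * Real.Gamma β)) * ((r - a) ^ (α + β - 1) / (α + β - 1)) := by
    unfold G
    rw [min_self]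
    have hcong : (∫ s in a..r, (r - s) ^ (β - 1) * (r - s) ^ (α - 1))
        = ∫ s in a..r, (r - s) ^ (α + β - 2) := by
      apply intervalIntegral.integral_congr
      intro s hs
      rw [Set.uIcc_of_le har] at hs
      exact combine_rpow hα1 hβ1 (by linarith [hs.2])
    rw [hcong, int_rpow_sub hγ, show α + β - 2 + 1 = α + β - 1 from by ring]
  constructor
  · intro t ht
    simp only [Set.mem_setOf_eq, hval]
    have hat : a ≤ t := ht.1
    set m := min t r with hm
    have ham : a ≤ m := le_min hat har
    have hmr : m ≤ r := min_le_right _ _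
    have hmt : m ≤ t := min_le_left _ _
    have hbound : (∫ s in a..m, (t - s) ^ (β - 1) * (r - s) ^ (α - 1))
        ≤ (r - a) ^ (α + β - 1) / (α + β - 1) := by
      by_cases hint : IntervalIntegrable
          (fun s => (t - s) ^ (β - 1) * (r - s) ^ (α - 1)) volume a m
      · have hgint : IntervalIntegrable (fun s => (m - s) ^ (α + β - 2)) volume a m := by
          have := (intervalIntegral.intervalIntegrable_rpow' (a := 0) (b := m - a)
            hγ).comp_sub_left m
          simpa using this.symm
        have h1 : (∫ s in a..m, (t - s) ^ (β - 1) * (r - s) ^ (α - 1))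
            ≤ ∫ s in a..m, (m - s) ^ (α + β - 2) := by
          apply intervalIntegral.integral_mono_ae_restrict ham hint hgint
          have hne : ∀ᵐ s ∂(volume.restrict (Icc a m)), s ≠ m := by
            apply ae_restrict_of_ae
            refine ae_iff.mpr ?_
            have h : {s : ℝ | ¬ s ≠ m} = {m} := by ext x; simp
            rw [h]; simp
          filter_upwards [ae_restrict_mem measurableSet_Icc, hne] with s hs hsne
          have hsm : s < m := lt_of_le_of_ne hs.2 hsne
          have h0 : 0 < m - s := by linarith
          have h1 : (t - s) ^ (β - 1) ≤ (m - s) ^ (β - 1) :=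
            Real.rpow_le_rpow_of_nonpos h0 (by linarith) (by linarith)
          have h2 : (r - s) ^ (α - 1) ≤ (m - s) ^ (α - 1) :=
            Real.rpow_le_rpow_of_nonpos h0 (by linarith) (by linarith)
          calc (t - s) ^ (β - 1) * (r - s) ^ (α - 1)
              ≤ (m - s) ^ (β - 1) * (m - s) ^ (α - 1) :=
                mul_le_mul h1 h2 (Real.rpow_nonneg (by linarith) _)
                  (Real.rpow_nonneg h0.le _)
            _ = (m - s) ^ (α + β - 2) := combine_rpow hα1 hβ1 h0.le
        have h2 : (∫ s in a..m, (m - s) ^ (α + β - 2))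
            = (m - a) ^ (α + β - 1) / (α + β - 1) := by
          have := int_rpow_sub hγ a m
          rw [this]; ring_nf
        have h3 : (m - a) ^ (α + β - 1) ≤ (r - a) ^ (α + β - 1) :=
          Real.rpow_le_rpow (by linarith) (by linarith) hσ.le
        calc (∫ s in a..m, (t - s) ^ (β - 1) * (r - s) ^ (α - 1))
            ≤ (m - a) ^ (α + β - 1) / (α + β - 1) := by rw [← h2]; exact h1
          _ ≤ (r - a) ^ (α + β - 1) / (α + β - 1) := by gcongr
      · rw [intervalIntegral.integral_undef hint]
        exact div_nonneg (Real.rpow_nonneg (by linarith) _) hσ.le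
    unfold G
    have hc : 0 ≤ 1 / (Real.Gamma α * Real.Gamma β) := by positivity
    exact mul_le_mul_of_nonneg_left hbound hc
  · rw [hval, div_mul_div_comm, one_mul]
    ring_nf
end

section
/- Let 0 < α, β ≤ 1 with 1 < α + β ≤ 2, a < b. For all t, r ∈ [a,b], G(t,r) ≤ (b-a)^{α+β-1}/((α+β-1)Γ(α)Γ(β)), where G is the piecewise Green function G(t,r) = (1/(Γ(α)Γ(β))) ∫_a^{min(t,r)} (t-s)^{β-1}(r-s)^{α-1} ds. -/
open Real MeasureTheory Set

theorem stmt_5 (a b α β : ℝ) (hα0 : 0 < α) (hα1 : α ≤ 1) (hβ0 : 0 < β) (hβ1 : β ≤ 1)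
    (hs1 : 1 < α + β) (hs2 : α + β ≤ 2) (hab : a < b) :
    ∀ t ∈ Icc a b, ∀ r ∈ Icc a b,
      G a α β t r ≤ (b - a) ^ (α + β - 1) / ((α + β - 1) * Real.Gamma α * Real.Gamma β) := by
  intro t ht r hr
  have hΓα : 0 < Real.Gamma α := Real.Gamma_pos_of_pos hα0
  have hΓβ : 0 < Real.Gamma β := Real.Gamma_pos_of_pos hβ0
  have hs1' : 0 < α + β - 1 := by linarith
  set m := min t r with hm
  have ham : a ≤ m := le_min ht.1 hr.1
  have hmb : m ≤ b := min_le_left t r |>.trans ht.2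
  set e : ℝ := α + β - 2 with he
  have hee : -1 < e := by simp [he]; linarith
  -- bound for the integral
  have hRHSnn : (0:ℝ) ≤ (b - a) ^ (α + β - 1) / (α + β - 1) := by
    apply div_nonneg _ hs1'.le
    exact Real.rpow_nonneg (by linarith) _
  have key : (∫ s in a..m, (t - s) ^ (β - 1) * (r - s) ^ (α - 1))
      ≤ (b - a) ^ (α + β - 1) / (α + β - 1) := by
    by_cases hint : IntervalIntegrable (fun s => (t - s) ^ (β - 1) * (r - s) ^ (α - 1))
        volume a m
    · -- dominating function
      have hgint : IntervalIntegrable (fun s => (m - s) ^ e) volume a m := by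
        have h1 := (intervalIntegral.intervalIntegrable_rpow' hee (a := 0)
          (b := m - a)).comp_sub_left m
        simp only [sub_zero, sub_sub_cancel] at h1
        exact h1.symm
      have hmono : (∫ s in a..m, (t - s) ^ (β - 1) * (r - s) ^ (α - 1))
          ≤ ∫ s in a..m, (m - s) ^ e := by
        apply intervalIntegral.integral_mono_ae_restrict ham hint hgint
        have hne : ∀ᵐ s : ℝ, s ≠ m := by
          have hset : {x : ℝ | ¬ x ≠ m} = {m} := by ext x; simp
          rw [ae_iff, hset]
          exact measure_singleton m
        have hsm : ∀ᵐ s ∂(volume.restrict (Icc a m)), s ≠ m := ae_restrict_of_ae hne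
        filter_upwards [hsm, ae_restrict_mem measurableSet_Icc] with s hsm hs
        have hs2' : s < m := lt_of_le_of_ne hs.2 hsm
        have h1 : (0:ℝ) < m - s := by linarith
        have h2 : m - s ≤ t - s := sub_le_sub_right (min_le_left t r) s
        have h3 : m - s ≤ r - s := sub_le_sub_right (min_le_right t r) s
        calc (t - s) ^ (β - 1) * (r - s) ^ (α - 1)
            ≤ (m - s) ^ (β - 1) * (m - s) ^ (α - 1) := by
              apply mul_le_mul
              · exact Real.rpow_le_rpow_of_nonpos h1 h2 (by linarith)
              · exact Real.rpow_le_rpow_of_nonpos h1 h3 (by linarith)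
              · exact Real.rpow_nonneg (by linarith) _
              · exact Real.rpow_nonneg h1.le _
          _ = (m - s) ^ e := by
              rw [← Real.rpow_add h1, he]; ring_nf
      have hgval : (∫ s in a..m, (m - s) ^ e) = (m - a) ^ (α + β - 1) / (α + β - 1) := by
        rw [intervalIntegral.integral_comp_sub_left (fun x => x ^ e) m, sub_self]
        rw [integral_rpow (Or.inl hee)]
        rw [Real.zero_rpow (by linarith), sub_zero]
        congr 1 <;> [skip; skip] <;> rw [he] <;> ring_nf
      refine hmono.trans ?_
      rw [hgval]
      gcongr <;> linarith
    · rw [intervalIntegral.integral_undef hint]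
      exact hRHSnn
  have : G a α β t r = (1 / (Real.Gamma α * Real.Gamma β)) *
      ∫ s in a..m, (t - s) ^ (β - 1) * (r - s) ^ (α - 1) := rfl
  rw [this]
  have hc : (0:ℝ) < 1 / (Real.Gamma α * Real.Gamma β) := by positivity
  calc (1 / (Real.Gamma α * Real.Gamma β)) *
        (∫ s in a..m, (t - s) ^ (β - 1) * (r - s) ^ (α - 1))
      ≤ (1 / (Real.Gamma α * Real.Gamma β)) *
        ((b - a) ^ (α + β - 1) / (α + β - 1)) := by
        exact mul_le_mul_of_nonneg_left key hc.le
    _ = (b - a) ^ (α + β - 1) / ((α + β - 1) * Real.Gamma α * Real.Gamma β) := by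
        rw [one_div_mul_eq_div, div_div, mul_assoc]
end

section
/- Let 0 < α, β ≤ 1 with 1 < α + β ≤ 2, a < b, q : [a,b] → ℝ continuous, and let u : [a,b] → ℝ be continuous, not identically zero, satisfying the integral equation u(t) = ∫_a^b G(t,r) q(r) u(r) dr for all t ∈ [a,b], where G(t,r) = (1/(Γ(α)Γ(β))) ∫_a^{min(t,r)} (t-s)^{β-1}(r-s)^{α-1} ds. Then ∫_a^b |q(r)| dr ≥ (α+β-1)Γ(α)Γ(β)/(b-a)^{α+β-1}. -/
open Real MeasureTheory Set

lemma G_nonneg (a b α β t r : ℝ) (hΓα : 0 < Real.Gamma α) (hΓβ : 0 < Real.Gamma β)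
    (ht : t ∈ Icc a b) (hr : r ∈ Icc a b) : 0 ≤ G a α β t r := by
  unfold G
  apply mul_nonneg (by positivity)
  apply intervalIntegral.integral_nonneg (le_min ht.1 hr.1)
  intro s hs
  have hts : s ≤ t := le_trans (hs.2.trans (min_le_left _ _)) le_rfl
  have hrs : s ≤ r := le_trans (hs.2.trans (min_le_right _ _)) le_rfl
  exact mul_nonneg (Real.rpow_nonneg (by linarith) _) (Real.rpow_nonneg (by linarith) _)

lemma inner_le (a b α β t r : ℝ) (hα0 : 0 < α) (hα1 : α ≤ 1) (hβ0 : 0 < β) (hβ1 : β ≤ 1)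
    (hs1 : 1 < α + β) (hab : a < b) (ht : t ∈ Icc a b) (hr : r ∈ Icc a b) :
    (∫ s in a..(min t r), (t - s) ^ (β - 1) * (r - s) ^ (α - 1)) ≤
      (b - a) ^ (α + β - 1) / (α + β - 1) := by
  set m := min t r with hm
  have ham : a ≤ m := le_min ht.1 hr.1
  have hmb : m ≤ b := (min_le_left _ _).trans ht.2
  have hp : (-1 : ℝ) < α + β - 2 := by linarith
  -- the majorant is interval integrable
  have hig0 : IntervalIntegrable (fun x : ℝ => x ^ (α + β - 2)) volume (m - m) (m - a) :=
    intervalIntegral.intervalIntegrable_rpow' hp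
  have hig : IntervalIntegrable (fun s : ℝ => (m - s) ^ (α + β - 2)) volume a m := by
    simpa using (hig0.comp_sub_left m).symm
  -- value of the majorant integral
  have hval : (∫ s in a..m, (m - s) ^ (α + β - 2)) = (m - a) ^ (α + β - 1) / (α + β - 1) := by
    rw [intervalIntegral.integral_comp_sub_left (fun x : ℝ => x ^ (α + β - 2)) m]
    rw [sub_self]
    rw [integral_rpow (Or.inl hp)]
    rw [Real.zero_rpow (by intro h; linarith : α + β - 2 + 1 ≠ 0)]
    norm_num
    rw [show α + β - 2 + 1 = α + β - 1 by ring]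
  -- comparison
  have hcmp : (∫ s in a..m, (t - s) ^ (β - 1) * (r - s) ^ (α - 1)) ≤
      ∫ s in a..m, (m - s) ^ (α + β - 2) := by
    rw [intervalIntegral.integral_of_le ham, intervalIntegral.integral_of_le ham]
    apply integral_mono_of_nonneg
    · filter_upwards [ae_restrict_mem measurableSet_Ioc] with s hs
      have hts : s ≤ t := hs.2.trans (min_le_left _ _)
      have hrs : s ≤ r := hs.2.trans (min_le_right _ _)
      exact mul_nonneg (Real.rpow_nonneg (by linarith) _) (Real.rpow_nonneg (by linarith) _)
    · exact hig.1
    · have hne : ∀ᵐ s ∂(volume.restrict (Ioc a m)), s ≠ m := by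
        refine (ae_iff.2 ?_)
        have : {s : ℝ | ¬ s ≠ m} = {m} := by ext x; simp
        rw [this]
        exact le_antisymm ((Measure.restrict_apply_le _ _).trans (by simp)) bot_le
      filter_upwards [ae_restrict_mem measurableSet_Ioc, hne] with s hs hsm
      have hsm' : s < m := lt_of_le_of_ne hs.2 hsm
      have h1 : (0:ℝ) < m - s := by linarith
      have hts : m - s ≤ t - s := by
        have := min_le_left t r; simp only [← hm] at this; linarith
      have hrs : m - s ≤ r - s := by
        have := min_le_right t r; simp only [← hm] at this; linarith
      have hb1 : (t - s) ^ (β - 1) ≤ (m - s) ^ (β - 1) :=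
        Real.rpow_le_rpow_of_nonpos h1 hts (by linarith)
      have hb2 : (r - s) ^ (α - 1) ≤ (m - s) ^ (α - 1) :=
        Real.rpow_le_rpow_of_nonpos h1 hrs (by linarith)
      calc (t - s) ^ (β - 1) * (r - s) ^ (α - 1)
          ≤ (m - s) ^ (β - 1) * (m - s) ^ (α - 1) := by
            apply mul_le_mul hb1 hb2 (Real.rpow_nonneg (by linarith) _)
              (Real.rpow_nonneg h1.le _)
        _ = (m - s) ^ (α + β - 2) := by
            rw [← Real.rpow_add h1]; ring_nf
  calc (∫ s in a..m, (t - s) ^ (β - 1) * (r - s) ^ (α - 1))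
      ≤ (m - a) ^ (α + β - 1) / (α + β - 1) := by rw [← hval]; exact hcmp
    _ ≤ (b - a) ^ (α + β - 1) / (α + β - 1) := by
        have hσ : (0:ℝ) < α + β - 1 := by linarith
        have h2 : (m - a) ^ (α + β - 1) ≤ (b - a) ^ (α + β - 1) :=
          Real.rpow_le_rpow (by linarith) (by linarith) hσ.le
        exact div_le_div_of_nonneg_right h2 hσ.le

theorem stmt_6 (a b α β : ℝ) (hα0 : 0 < α) (hα1 : α ≤ 1) (hβ0 : 0 < β) (hβ1 : β ≤ 1)
    (hs1 : 1 < α + β) (hs2 : α + β ≤ 2) (hab : a < b)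
    (q u : ℝ → ℝ) (hq : ContinuousOn q (Icc a b)) (hu : ContinuousOn u (Icc a b))
    (hne : ∃ t ∈ Icc a b, u t ≠ 0)
    (heq : ∀ t ∈ Icc a b, u t = ∫ r in a..b, G a α β t r * q r * u r) :
    (α + β - 1) * Real.Gamma α * Real.Gamma β / (b - a) ^ (α + β - 1) ≤
      ∫ r in a..b, |q r| := by
  have hΓα := Real.Gamma_pos_of_pos hα0
  have hΓβ := Real.Gamma_pos_of_pos hβ0
  have hσ : (0:ℝ) < α + β - 1 := by linarith
  have hpow : (0:ℝ) < (b - a) ^ (α + β - 1) := Real.rpow_pos_of_pos (by linarith) _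
  set K := (b - a) ^ (α + β - 1) / ((α + β - 1) * Real.Gamma α * Real.Gamma β) with hK
  have hKpos : 0 < K := by positivity
  -- G is bounded by K
  have hGle : ∀ t ∈ Icc a b, ∀ r ∈ Icc a b, G a α β t r ≤ K := by
    intro t ht r hr
    unfold G
    have h1 := inner_le a b α β t r hα0 hα1 hβ0 hβ1 hs1 hab ht hr
    calc (1 / (Real.Gamma α * Real.Gamma β)) *
        ∫ s in a..(min t r), (t - s) ^ (β - 1) * (r - s) ^ (α - 1)
        ≤ (1 / (Real.Gamma α * Real.Gamma β)) * ((b - a) ^ (α + β - 1) / (α + β - 1)) := by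
          apply mul_le_mul_of_nonneg_left h1 (by positivity)
      _ = K := by rw [hK, div_mul_div_comm, one_mul]; ring_nf
  -- maximizer of |u|
  obtain ⟨t₀, ht₀, hmax⟩ := isCompact_Icc.exists_isMaxOn (nonempty_Icc.2 hab.le) hu.abs
  set M := |u t₀| with hMdef
  obtain ⟨t₁, ht₁, hu1⟩ := hne
  have hM : 0 < M := lt_of_lt_of_le (abs_pos.2 hu1) (hmax ht₁)
  set Q := ∫ r in a..b, |q r| with hQ
  have hqi : IntegrableOn (fun r => |q r|) (Ioc a b) :=
    (hq.abs.integrableOn_Icc).mono_set Ioc_subset_Icc_self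
  have key : M ≤ K * M * Q := by
    have h1 : M = |∫ r in a..b, G a α β t₀ r * q r * u r| := by
      rw [hMdef, heq t₀ ht₀]
    have h2 : |∫ r in a..b, G a α β t₀ r * q r * u r| ≤
        ∫ r in uIoc a b, |G a α β t₀ r| * |q r| * |u r| := by
      simpa using intervalIntegral.norm_integral_le_integral_norm_uIoc
        (f := fun r => G a α β t₀ r * q r * u r) (a := a) (b := b) (μ := volume)
    have h3 : (∫ r in uIoc a b, |G a α β t₀ r| * |q r| * |u r|) ≤
        ∫ r in Ioc a b, K * M * |q r| := by
      rw [uIoc_of_le hab.le]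
      refine integral_mono_of_nonneg (Filter.Eventually.of_forall fun r => by positivity)
        (hqi.const_mul (K * M)) ?_
      filter_upwards [ae_restrict_mem measurableSet_Ioc] with r hr
      have hrI : r ∈ Icc a b := Ioc_subset_Icc_self hr
      rw [abs_of_nonneg (G_nonneg a b α β t₀ r hΓα hΓβ ht₀ hrI)]
      calc G a α β t₀ r * |q r| * |u r| ≤ K * |q r| * M := by
            apply mul_le_mul (mul_le_mul_of_nonneg_right (hGle t₀ ht₀ r hrI) (abs_nonneg _))
              (hmax hrI) (abs_nonneg _) (by positivity)
        _ = K * M * |q r| := by ring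
    have h4 : (∫ r in Ioc a b, K * M * |q r|) = K * M * Q := by
      rw [hQ, intervalIntegral.integral_of_le hab.le, MeasureTheory.integral_const_mul]
    exact h1.trans_le (h2.trans (h3.trans_eq h4))
  have h5 : 1 ≤ K * Q := by nlinarith [key, hM]
  have h6 : (α + β - 1) * Real.Gamma α * Real.Gamma β ≤ (b - a) ^ (α + β - 1) * Q := by
    calc (α + β - 1) * Real.Gamma α * Real.Gamma β
        = ((α + β - 1) * Real.Gamma α * Real.Gamma β) * 1 := by ring
      _ ≤ ((α + β - 1) * Real.Gamma α * Real.Gamma β) * (K * Q) := by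
          apply mul_le_mul_of_nonneg_left h5 (by positivity)
      _ = (b - a) ^ (α + β - 1) * Q := by rw [hK]; field_simp
  rw [div_le_iff₀ hpow]
  linarith [h6, mul_comm ((b - a) ^ (α + β - 1)) Q]
end

section
/- Let a < b and let u : [a,b] → ℝ be a nontrivial continuous solution of the integral equation u(t) = ∫_a^b G(t,r) q(r) u(r) dr, where for α = β = 1 the Green function is G(t,r) = min(t,r) - a (i.e., the Green function of u'' + q u = 0 with u(a) = 0 = u'(b)). Then ∫_a^b |q(r)| dr ≥ 1/(b-a). -/
open Real MeasureTheory Set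

theorem stmt_7 (a b : ℝ) (hab : a < b) (q u : ℝ → ℝ)
    (hq : ContinuousOn q (Icc a b)) (hu : ContinuousOn u (Icc a b))
    (hne : ∃ t ∈ Icc a b, u t ≠ 0)
    (heq : ∀ t ∈ Icc a b, u t = ∫ r in a..b, (min t r - a) * q r * u r) :
    1 / (b - a) ≤ ∫ r in a..b, |q r| := by
  have hab' : a ≤ b := hab.le
  have huIcc : uIcc a b = Icc a b := uIcc_of_le hab'
  obtain ⟨t₀, ht₀, hmax⟩ := isCompact_Icc.exists_isMaxOn (Set.nonempty_Icc.2 hab')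
    (hu.norm)
  set M := |u t₀| with hM
  obtain ⟨t₁, ht₁, hne₁⟩ := hne
  have hMpos : 0 < M := lt_of_lt_of_le (abs_pos.2 hne₁) (hmax ht₁)
  -- integrability
  have hint : IntervalIntegrable (fun r => (min t₀ r - a) * q r * u r) volume a b := by
    apply ContinuousOn.intervalIntegrable
    rw [huIcc]
    exact ((((continuous_const.min continuous_id).sub continuous_const).continuousOn).mul hq).mul hu
  have hintq : IntervalIntegrable (fun r => |q r|) volume a b := by
    apply ContinuousOn.intervalIntegrable
    rw [huIcc]; exact hq.abs
  -- pointwise bound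
  have hbound : ∀ r ∈ Icc a b, |(min t₀ r - a) * q r * u r| ≤ (b - a) * M * |q r| := by
    intro r hr
    have h1 : |min t₀ r - a| ≤ b - a := by
      rw [abs_le]
      constructor
      · nlinarith [min_le_left t₀ r, min_le_right t₀ r, le_min ht₀.1 hr.1, hr.1, ht₀.1]
      · nlinarith [min_le_left t₀ r, ht₀.2]
    have h2 : |u r| ≤ M := hmax hr
    calc |(min t₀ r - a) * q r * u r| = |min t₀ r - a| * |q r| * |u r| := by
          rw [abs_mul, abs_mul]
      _ ≤ (b - a) * |q r| * M := by
          apply mul_le_mul (mul_le_mul_of_nonneg_right h1 (abs_nonneg _)) h2 (abs_nonneg _)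
          have : (0:ℝ) ≤ b - a := by linarith
          positivity
      _ = (b - a) * M * |q r| := by ring
  -- main inequality
  have key : M ≤ (b - a) * M * ∫ r in a..b, |q r| := by
    have h0 : M ≤ |∫ r in a..b, (min t₀ r - a) * q r * u r| := by
      rw [hM, heq t₀ ht₀]
    calc M ≤ |∫ r in a..b, (min t₀ r - a) * q r * u r| := h0
      _ ≤ ∫ r in a..b, |(min t₀ r - a) * q r * u r| := by
          exact intervalIntegral.abs_integral_le_integral_abs hab'
      _ ≤ ∫ r in a..b, (b - a) * M * |q r| := by
          apply intervalIntegral.integral_mono_on hab' hint.abs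
            (hintq.const_mul _)
          intro r hr; exact hbound r hr
      _ = (b - a) * M * ∫ r in a..b, |q r| := by
          rw [intervalIntegral.integral_const_mul]
  have hI : 0 < ∫ r in a..b, |q r| := by
    by_contra h
    push_neg at h
    nlinarith [mul_pos (sub_pos.2 hab) hMpos, mul_nonpos_of_nonneg_of_nonpos (le_of_lt (mul_pos (sub_pos.2 hab) hMpos)) h]
  rw [div_le_iff₀ (by linarith)]
  nlinarith
end

section
/- Let 0 < α, β ≤ 1 with 1 < α + β ≤ 2, a < b, λ ∈ ℝ, and suppose there exists a continuous, not identically zero function u : [a,b] → ℝ satisfying u(t) = λ ∫_a^b G(t,r) u(r) dr for all t ∈ [a,b], where G(t,r) = (1/(Γ(α)Γ(β))) ∫_a^{min(t,r)} (t-s)^{β-1}(r-s)^{α-1} ds. Then |λ| ≥ (α+β-1)Γ(α)Γ(β)/(b-a)^{α+β}. -/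
open Real MeasureTheory Set

lemma G_bounds (a b α β t r : ℝ) (hα0 : 0 < α) (hα1 : α ≤ 1) (hβ0 : 0 < β) (hβ1 : β ≤ 1)
    (hs1 : 1 < α + β) (hab : a < b) (ht : t ∈ Icc a b) (hr : r ∈ Icc a b) :
    0 ≤ G a α β t r ∧
      G a α β t r ≤ (1 / (Real.Gamma α * Real.Gamma β)) *
        ((b - a) ^ (α + β - 1) / (α + β - 1)) := by
  have hΓα := Real.Gamma_pos_of_pos hα0
  have hΓβ := Real.Gamma_pos_of_pos hβ0
  have hc : (0:ℝ) < 1 / (Real.Gamma α * Real.Gamma β) := by positivity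
  set m := min t r with hm
  have ham : a ≤ m := le_min ht.1 hr.1
  have hmb : m ≤ b := le_trans (min_le_left _ _) ht.2
  have hmt : m ≤ t := min_le_left _ _
  have hmr : m ≤ r := min_le_right _ _
  have hfnn : ∀ s ∈ Icc a m, (0:ℝ) ≤ (t - s) ^ (β - 1) * (r - s) ^ (α - 1) := by
    intro s hs
    have h1 : 0 ≤ t - s := by linarith [hs.2]
    have h2 : 0 ≤ r - s := by linarith [hs.2]
    exact mul_nonneg (Real.rpow_nonneg h1 _) (Real.rpow_nonneg h2 _)
  have hInn : (0:ℝ) ≤ ∫ s in a..m, (t - s) ^ (β - 1) * (r - s) ^ (α - 1) :=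
    intervalIntegral.integral_nonneg ham hfnn
  have hgnn : ∀ s ∈ Icc a m, (0:ℝ) ≤ (m - s) ^ (α + β - 2) := by
    intro s hs
    exact Real.rpow_nonneg (by linarith [hs.2]) _
  -- integrability of the dominating function
  have hIg : IntervalIntegrable (fun s => (m - s) ^ (α + β - 2)) volume a m := by
    have h := (intervalIntegral.intervalIntegrable_rpow'
      (show (-1:ℝ) < α + β - 2 by linarith) (a := 0) (b := m - a)).comp_sub_left m
    simpa using h.symm
  -- a.e. comparison
  have hae : ∀ᵐ s ∂(volume.restrict (Icc a m)),
      (t - s) ^ (β - 1) * (r - s) ^ (α - 1) ≤ (m - s) ^ (α + β - 2) := by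
    filter_upwards [ae_restrict_mem measurableSet_Icc,
      ((Set.countable_singleton m).ae_notMem volume).filter_mono
        (ae_mono Measure.restrict_le_self)] with s hs hsm
    have hsm' : s < m := lt_of_le_of_ne hs.2 (by simpa using hsm)
    have hms : (0:ℝ) < m - s := by linarith
    have h1 : (t - s) ^ (β - 1) ≤ (m - s) ^ (β - 1) :=
      Real.rpow_le_rpow_of_nonpos hms (by linarith) (by linarith)
    have h2 : (r - s) ^ (α - 1) ≤ (m - s) ^ (α - 1) :=
      Real.rpow_le_rpow_of_nonpos hms (by linarith) (by linarith)
    calc (t - s) ^ (β - 1) * (r - s) ^ (α - 1)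
        ≤ (m - s) ^ (β - 1) * (m - s) ^ (α - 1) := by
          apply mul_le_mul h1 h2 (Real.rpow_nonneg (by linarith) _)
            (Real.rpow_nonneg hms.le _)
      _ = (m - s) ^ (α + β - 2) := by
          rw [← Real.rpow_add hms]
          ring_nf
  have hle : (∫ s in a..m, (t - s) ^ (β - 1) * (r - s) ^ (α - 1))
      ≤ ∫ s in a..m, (m - s) ^ (α + β - 2) := by
    by_cases hfi : IntervalIntegrable
        (fun s => (t - s) ^ (β - 1) * (r - s) ^ (α - 1)) volume a m
    · exact intervalIntegral.integral_mono_ae_restrict ham hfi hIg hae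
    · rw [intervalIntegral.integral_undef hfi]
      exact intervalIntegral.integral_nonneg ham hgnn
  have hval : (∫ s in a..m, (m - s) ^ (α + β - 2)) = (m - a) ^ (α + β - 1) / (α + β - 1) := by
    have h := intervalIntegral.integral_comp_sub_left (a := a) (b := m)
      (fun x => x ^ (α + β - 2)) m
    rw [h, sub_self]
    rw [integral_rpow (Or.inl (by linarith))]
    rw [Real.zero_rpow (by intro h'; linarith [h'] : α + β - 2 + 1 ≠ 0)]
    norm_num
    ring_nf
  have hfin : (∫ s in a..m, (t - s) ^ (β - 1) * (r - s) ^ (α - 1))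
      ≤ (b - a) ^ (α + β - 1) / (α + β - 1) := by
    refine hle.trans ?_
    rw [hval]
    gcongr
  constructor
  · exact mul_nonneg hc.le hInn
  · exact mul_le_mul_of_nonneg_left hfin hc.le

theorem stmt_8 (a b α β lam : ℝ) (hα0 : 0 < α) (hα1 : α ≤ 1) (hβ0 : 0 < β) (hβ1 : β ≤ 1)
    (hs1 : 1 < α + β) (hs2 : α + β ≤ 2) (hab : a < b)
    (u : ℝ → ℝ) (hu : ContinuousOn u (Icc a b)) (hne : ∃ t ∈ Icc a b, u t ≠ 0)
    (heq : ∀ t ∈ Icc a b, u t = lam * ∫ r in a..b, G a α β t r * u r) :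
    (α + β - 1) * Real.Gamma α * Real.Gamma β / (b - a) ^ (α + β) ≤ |lam| := by
  have hΓα := Real.Gamma_pos_of_pos hα0
  have hΓβ := Real.Gamma_pos_of_pos hβ0
  have hba : (0:ℝ) < b - a := by linarith
  obtain ⟨t₀, ht₀, hmax⟩ := isCompact_Icc.exists_isMaxOn (nonempty_Icc.2 hab.le)
    (hu.abs)
  set M := |u t₀| with hMdef
  have hM : 0 < M := by
    obtain ⟨t₁, ht₁, hne₁⟩ := hne
    exact lt_of_lt_of_le (abs_pos.2 hne₁) (hmax ht₁)
  set K := (1 / (Real.Gamma α * Real.Gamma β)) * ((b - a) ^ (α + β - 1) / (α + β - 1))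
    with hKdef
  have hK : 0 ≤ K := mul_nonneg (by positivity)
    (div_nonneg (Real.rpow_nonneg hba.le _) (by linarith))
  have hbound : ∀ r ∈ Set.uIoc a b, ‖G a α β t₀ r * u r‖ ≤ K * M := by
    intro r hr
    rw [Set.uIoc_of_le hab.le] at hr
    have hr' : r ∈ Icc a b := Ioc_subset_Icc_self hr
    obtain ⟨hG0, hGK⟩ := G_bounds a b α β t₀ r hα0 hα1 hβ0 hβ1 hs1 hab ht₀ hr'
    rw [Real.norm_eq_abs, abs_mul, abs_of_nonneg hG0]
    exact mul_le_mul hGK (hmax hr') (abs_nonneg _) hK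
  have h1 : M ≤ |lam| * (K * M * (b - a)) := by
    have := intervalIntegral.norm_integral_le_of_norm_le_const hbound
    rw [Real.norm_eq_abs] at this
    calc M = |u t₀| := rfl
      _ = |lam * ∫ r in a..b, G a α β t₀ r * u r| := by rw [heq t₀ ht₀]
      _ = |lam| * |∫ r in a..b, G a α β t₀ r * u r| := abs_mul _ _
      _ ≤ |lam| * (K * M * (b - a)) := by
          apply mul_le_mul_of_nonneg_left _ (abs_nonneg _)
          calc |∫ r in a..b, G a α β t₀ r * u r| ≤ K * M * |b - a| := this
            _ = K * M * (b - a) := by rw [abs_of_pos hba]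
  have hKba : K * (b - a) = (b - a) ^ (α + β) /
      ((α + β - 1) * Real.Gamma α * Real.Gamma β) := by
    have hr1 : (b - a) ^ (α + β) = (b - a) ^ (α + β - 1) * (b - a) := by
      have := Real.rpow_add_one (ne_of_gt hba) (α + β - 1)
      rw [show α + β - 1 + 1 = α + β by ring] at this
      simpa using this
    rw [hKdef, hr1]
    field_simp
  set C0 := (α + β - 1) * Real.Gamma α * Real.Gamma β with hC0def
  have hC0 : 0 < C0 := by
    apply mul_pos (mul_pos (by linarith) hΓα) hΓβ
  have hD : (0:ℝ) < (b - a) ^ (α + β) := Real.rpow_pos_of_pos hba _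
  have h3 : 1 ≤ |lam| * ((b - a) ^ (α + β) / C0) := by
    have h2 : M ≤ |lam| * ((b - a) ^ (α + β) / C0) * M := by
      calc M ≤ |lam| * (K * M * (b - a)) := h1
        _ = |lam| * ((b - a) ^ (α + β) / C0) * M := by
            rw [show K * M * (b - a) = K * (b - a) * M by ring, hKba]; ring
    exact (le_mul_iff_one_le_left hM).mp h2
  rw [div_le_iff₀ hD]
  calc C0 = 1 * C0 := (one_mul _).symm
    _ ≤ (|lam| * ((b - a) ^ (α + β) / C0)) * C0 := by
        exact mul_le_mul_of_nonneg_right h3 hC0.le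
    _ = |lam| * (b - a) ^ (α + β) := by field_simp
end

section
/- Let 0 < α, β ≤ 1, a < b, and h : [a,b] → ℝ continuous. Then for every t ∈ [a,b], (1/(Γ(α)Γ(β))) ∫_a^t (t-s)^{β-1} (∫_s^b (r-s)^{α-1} h(r) dr) ds = ∫_a^b G(t,r) h(r) dr, where G(t,r) = (1/(Γ(α)Γ(β))) ∫_a^{min(t,r)} (t-s)^{β-1}(r-s)^{α-1} ds. -/
open Real MeasureTheory Set

theorem stmt_9 (a b α β : ℝ) (hα0 : 0 < α) (hα1 : α ≤ 1) (hβ0 : 0 < β) (hβ1 : β ≤ 1)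
    (hab : a < b) (h : ℝ → ℝ) (hh : ContinuousOn h (Icc a b)) :
    ∀ t ∈ Icc a b,
      (1 / (Real.Gamma α * Real.Gamma β)) *
          ∫ s in a..t, (t - s) ^ (β - 1) * ∫ r in s..b, (r - s) ^ (α - 1) * h r =
        ∫ r in a..b, G a α β t r * h r := by
  intro t ht
  obtain ⟨hat, htb⟩ := ht
  have hb : a ≤ b := hab.le
  set C : ℝ := 1 / (Real.Gamma α * Real.Gamma β) with hC
  -- continuous extension of h to all of ℝ
  set H : ℝ → ℝ := fun x => h ↑(Set.projIcc a b hb x) with hHdef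
  have hHcont : Continuous H := (ContinuousOn.restrict hh).comp continuous_projIcc
  have hHeq : ∀ r ∈ Icc a b, H r = h r := by
    intro r hr
    simp only [hHdef, Set.projIcc_of_mem hb hr]
  obtain ⟨M, hM⟩ := (isCompact_Icc (a := a) (b := b)).exists_bound_of_continuousOn hh
  have hM0 : 0 ≤ M := le_trans (norm_nonneg _) (hM a ⟨le_refl a, hb⟩)
  have hMH : ∀ r, ‖H r‖ ≤ M := fun r => hM _ (Set.projIcc a b hb r).2
  -- the kernel
  set F : ℝ × ℝ → ℝ := fun p => (t - p.1) ^ (β - 1) * ((p.2 - p.1) ^ (α - 1) * H p.2)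
    with hFdef
  set K : ℝ × ℝ → ℝ := fun p => if p.1 ≤ p.2 then F p else 0 with hKdef
  have hKm : Measurable K := by
    apply Measurable.ite (measurableSet_le measurable_fst measurable_snd) _ measurable_const
    fun_prop
  -- integrability of s ↦ (t-s)^(β-1) on Ioc a t
  have hβ1' : (-1 : ℝ) < β - 1 := by linarith
  have hα1' : (-1 : ℝ) < α - 1 := by linarith
  have hIβ : IntegrableOn (fun s => (t - s) ^ (β - 1)) (Ioc a t) := by
    have := (intervalIntegral.intervalIntegrable_rpow' (a := t - a) (b := 0) hβ1').comp_sub_left t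
    simp only [sub_zero, sub_sub_cancel] at this
    exact this.1
  -- integrability of r ↦ (r-s)^(α-1) on Ioc s b
  have hIα : ∀ s : ℝ, IntegrableOn (fun r => (r - s) ^ (α - 1)) (Ioc s b) := by
    intro s
    have := (intervalIntegral.intervalIntegrable_rpow' (a := 0) (b := b - s) hα1').comp_sub_right s
    simp only [zero_add, sub_add_cancel] at this
    exact this.1
  -- value of the inner integral of the pure kernel
  have hval : ∀ s : ℝ, s ≤ b → ∫ r in s..b, (r - s) ^ (α - 1) = (b - s) ^ α / α := by
    intro s _
    rw [intervalIntegral.integral_comp_sub_right (fun u : ℝ => u ^ (α - 1)) s]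
    rw [sub_self, integral_rpow (Or.inl hα1')]
    rw [sub_add_cancel, Real.zero_rpow (by positivity : α ≠ 0), sub_zero]
  -- set identities
  have hseteq1 : ∀ s : ℝ, a < s → s ≤ b → Ioc a b ∩ Ici s = Icc s b := by
    intro s has hsb
    ext r
    simp only [mem_inter_iff, mem_Ioc, mem_Ici, mem_Icc]
    constructor
    · rintro ⟨⟨_, h2⟩, h3⟩; exact ⟨h3, h2⟩
    · rintro ⟨h1, h2⟩; exact ⟨⟨lt_of_lt_of_le has h1, h2⟩, h1⟩
  have hKr : ∀ s : ℝ, (fun r => K (s, r)) = Set.indicator (Ici s) (fun r => F (s, r)) := by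
    intro s; funext r
    by_cases h' : s ≤ r
    · simp only [hKdef, if_pos h', Set.indicator_of_mem (mem_Ici.2 h')]
    · simp only [hKdef, if_neg h', Set.indicator_of_notMem (by simpa using h' : r ∉ Ici s)]
  have hKs : ∀ r : ℝ, (fun s => K (s, r)) = Set.indicator (Iic r) (fun s => F (s, r)) := by
    intro r; funext s
    by_cases h' : s ≤ r
    · simp only [hKdef, if_pos h', Set.indicator_of_mem (mem_Iic.2 h')]
    · simp only [hKdef, if_neg h', Set.indicator_of_notMem (by simpa using h' : s ∉ Iic r)]
  -- integrability in r for fixed s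
  have hFint : ∀ s : ℝ, IntegrableOn
      (fun r => (t - s) ^ (β - 1) * ((r - s) ^ (α - 1) * H r)) (Icc s b) := by
    intro s
    rw [integrableOn_Icc_iff_integrableOn_Ioc]
    have h1 : IntegrableOn (fun r => (r - s) ^ (α - 1) * H r) (Ioc s b) := by
      have h2 := (hIα s).bdd_mul hHcont.aestronglyMeasurable (Filter.Eventually.of_forall hMH)
      exact h2.congr (Filter.Eventually.of_forall fun r => mul_comm _ _)
    exact h1.const_mul _
  have hKint_r : ∀ s : ℝ, a < s → s ≤ b →
      Integrable (fun r => K (s, r)) (volume.restrict (Ioc a b)) := by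
    intro s has hsb
    rw [hKr s, integrable_indicator_iff measurableSet_Ici]
    rw [IntegrableOn, Measure.restrict_restrict measurableSet_Ici, inter_comm,
      hseteq1 s has hsb]
    simp only [hFdef]
    exact hFint s
  -- the norm bound
  have hbound : ∀ s : ℝ, a < s → s ≤ t →
      (∫ r, ‖K (s, r)‖ ∂(volume.restrict (Ioc a b)))
        ≤ (t - s) ^ (β - 1) * (M * ((b - a) ^ α / α)) := by
    intro s has hst
    have hsb : s ≤ b := hst.trans htb
    have hts : (0:ℝ) ≤ t - s := by linarith
    have hpt : ∀ r : ℝ, ‖K (s, r)‖ ≤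
        Set.indicator (Ici s) (fun r => (t - s) ^ (β - 1) * ((r - s) ^ (α - 1) * M)) r := by
      intro r
      by_cases h' : s ≤ r
      · rw [Set.indicator_of_mem (mem_Ici.2 h')]
        have hA : (0:ℝ) ≤ (t - s) ^ (β - 1) := Real.rpow_nonneg hts _
        have hB : (0:ℝ) ≤ (r - s) ^ (α - 1) := Real.rpow_nonneg (by linarith) _
        simp only [hKdef, if_pos h', hFdef]
        rw [Real.norm_eq_abs, abs_mul, abs_mul, abs_of_nonneg hA, abs_of_nonneg hB]
        gcongr
        simpa using hMH r
      · rw [Set.indicator_of_notMem (by simpa using h' : r ∉ Ici s)]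
        simp only [hKdef, if_neg h', norm_zero]
        positivity
    have hbd_int : IntegrableOn
        (Set.indicator (Ici s) (fun r => (t - s) ^ (β - 1) * ((r - s) ^ (α - 1) * M)))
        (Ioc a b) := by
      rw [IntegrableOn, integrable_indicator_iff measurableSet_Ici]
      rw [IntegrableOn, Measure.restrict_restrict measurableSet_Ici, inter_comm,
        hseteq1 s has hsb]
      exact (integrableOn_Icc_iff_integrableOn_Ioc (f := fun r => (t - s) ^ (β - 1) * ((r - s) ^ (α - 1) * M))).2 (((hIα s).mul_const M).const_mul _)
    calc (∫ r, ‖K (s, r)‖ ∂(volume.restrict (Ioc a b)))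
        ≤ ∫ r in Ioc a b,
            Set.indicator (Ici s) (fun r => (t - s) ^ (β - 1) * ((r - s) ^ (α - 1) * M)) r := by
          exact integral_mono (hKint_r s has hsb).norm hbd_int hpt
      _ = ∫ r in Icc s b, (t - s) ^ (β - 1) * ((r - s) ^ (α - 1) * M) := by
          rw [setIntegral_indicator measurableSet_Ici, hseteq1 s has hsb]
      _ = (t - s) ^ (β - 1) * ((∫ r in Icc s b, (r - s) ^ (α - 1)) * M) := by
          rw [integral_const_mul, integral_mul_const]
      _ = (t - s) ^ (β - 1) * (((b - s) ^ α / α) * M) := by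
          rw [integral_Icc_eq_integral_Ioc, ← intervalIntegral.integral_of_le hsb,
            hval s hsb]
      _ ≤ (t - s) ^ (β - 1) * (M * ((b - a) ^ α / α)) := by
          rw [mul_comm ((b - s) ^ α / α) M]
          have hba : (b - s) ^ α ≤ (b - a) ^ α :=
            Real.rpow_le_rpow (by linarith) (by linarith) hα0.le
          have hA : (0:ℝ) ≤ (t - s) ^ (β - 1) := Real.rpow_nonneg hts _
          gcongr
  -- product integrability
  have hKprod : Integrable K
      ((volume.restrict (Ioc a t)).prod (volume.restrict (Ioc a b))) := by
    rw [integrable_prod_iff hKm.aestronglyMeasurable]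
    constructor
    · filter_upwards [ae_restrict_mem measurableSet_Ioc] with s hs
      exact hKint_r s hs.1 (hs.2.trans htb)
    · apply Integrable.mono' (hIβ.mul_const (M * ((b - a) ^ α / α)))
      · exact (hKm.norm.aestronglyMeasurable).integral_prod_right'
      · filter_upwards [ae_restrict_mem measurableSet_Ioc] with s hs
        rw [Real.norm_eq_abs, abs_of_nonneg (integral_nonneg fun r => norm_nonneg _)]
        exact hbound s hs.1 hs.2
  have hswap : (∫ s in Ioc a t, ∫ r in Ioc a b, K (s, r))
      = ∫ r in Ioc a b, ∫ s in Ioc a t, K (s, r) :=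
    integral_integral_swap (f := fun s r => K (s, r)) (by exact hKprod)
  -- identify the left-hand side
  have stepL : (∫ s in a..t, (t - s) ^ (β - 1) * ∫ r in s..b, (r - s) ^ (α - 1) * h r)
      = ∫ s in Ioc a t, ∫ r in Ioc a b, K (s, r) := by
    rw [intervalIntegral.integral_of_le hat]
    apply setIntegral_congr_fun measurableSet_Ioc
    intro s hs
    obtain ⟨has, hst⟩ := hs
    simp only
    have hsb : s ≤ b := hst.trans htb
    have hinner : (∫ r in s..b, (r - s) ^ (α - 1) * h r)
        = ∫ r in s..b, (r - s) ^ (α - 1) * H r := by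
      apply intervalIntegral.integral_congr
      intro r hr
      rw [Set.uIcc_of_le hsb] at hr
      simp only
      rw [hHeq r ⟨le_trans has.le hr.1, hr.2⟩]
    rw [hinner, hKr s, setIntegral_indicator measurableSet_Ici, hseteq1 s has hsb,
      integral_Icc_eq_integral_Ioc, ← intervalIntegral.integral_of_le hsb]
    simp only [hFdef]
    rw [intervalIntegral.integral_const_mul]
  -- identify the right-hand side
  have stepR : (∫ r in a..b, G a α β t r * h r)
      = C * ∫ r in Ioc a b, ∫ s in Ioc a t, K (s, r) := by
    rw [intervalIntegral.integral_of_le hb, ← integral_const_mul]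
    apply setIntegral_congr_fun measurableSet_Ioc
    intro r hr
    obtain ⟨har, hrb⟩ := hr
    simp only
    have hamin : a ≤ min t r := le_min hat har.le
    rw [hKs r, setIntegral_indicator measurableSet_Iic]
    have e2 : Ioc a t ∩ Iic r = Ioc a (min t r) := by
      ext s
      simp only [mem_inter_iff, mem_Ioc, mem_Iic, le_min_iff]
      tauto
    rw [e2, ← intervalIntegral.integral_of_le hamin]
    rw [← hHeq r ⟨har.le, hrb⟩]
    simp only [hFdef, G, ← hC, ← mul_assoc]
    rw [intervalIntegral.integral_mul_const]
    ring
  calc C * ∫ s in a..t, (t - s) ^ (β - 1) * ∫ r in s..b, (r - s) ^ (α - 1) * h r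
      = C * ∫ s in Ioc a t, ∫ r in Ioc a b, K (s, r) := by rw [stepL]
    _ = C * ∫ r in Ioc a b, ∫ s in Ioc a t, K (s, r) := by rw [hswap]
    _ = ∫ r in a..b, G a α β t r * h r := stepR.symm
end

section
/- Let 0 < α, β ≤ 1 with 1 < α + β ≤ 2, a < b, q : [a,b] → ℝ continuous, and u : [a,b] → ℝ continuous satisfying u(t) = ∫_a^b G(t,r) q(r) u(r) dr with G(t,r) = (1/(Γ(α)Γ(β))) ∫_a^{min(t,r)} (t-s)^{β-1}(r-s)^{α-1} ds. Then, with ‖u‖ = max_{t∈[a,b]} |u(t)|, we have ‖u‖ ≤ ((b-a)^{α+β-1}/((α+β-1)Γ(α)Γ(β))) · ‖u‖ · ∫_a^b |q(r)| dr. -/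
open Real MeasureTheory Set

lemma G_abs_le (a b α β : ℝ) (hα0 : 0 < α) (hα1 : α ≤ 1) (hβ0 : 0 < β) (hβ1 : β ≤ 1)
    (hs1 : 1 < α + β) (hs2 : α + β ≤ 2) {t r : ℝ} (ht : t ∈ Icc a b) (hr : r ∈ Icc a b) :
    |G a α β t r| ≤ (b - a) ^ (α + β - 1) / ((α + β - 1) * Real.Gamma α * Real.Gamma β) := by
  have hΓα := Real.Gamma_pos_of_pos hα0
  have hΓβ := Real.Gamma_pos_of_pos hβ0
  set m := min t r with hm
  have ham : a ≤ m := le_min ht.1 hr.1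
  have hmt : m ≤ t := min_le_left _ _
  have hmr : m ≤ r := min_le_right _ _
  have hmb : m ≤ b := hmt.trans ht.2
  have hp : (-1 : ℝ) < α + β - 2 := by linarith
  set I := ∫ s in a..m, (t - s) ^ (β - 1) * (r - s) ^ (α - 1) with hI
  have hInn : 0 ≤ I := by
    apply intervalIntegral.integral_nonneg ham
    intro s hs
    exact mul_nonneg (Real.rpow_nonneg (by linarith [hs.2] : (0:ℝ) ≤ t - s) _)
      (Real.rpow_nonneg (by linarith [hs.2] : (0:ℝ) ≤ r - s) _)
  -- integrability of the comparison function
  have hgint : IntervalIntegrable (fun s => (m - s) ^ (α + β - 2)) volume a m := by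
    have h0 := intervalIntegral.intervalIntegrable_rpow' (a := m - a) (b := 0) hp
    have h1 := h0.comp_sub_left m
    simpa using h1
  -- value of the comparison integral
  have hcalc : (∫ s in a..m, (m - s) ^ (α + β - 2)) = (m - a) ^ (α + β - 1) / (α + β - 1) := by
    rw [intervalIntegral.integral_comp_sub_left (fun x => x ^ (α + β - 2)) m, sub_self]
    rw [integral_rpow (Or.inl hp),
      Real.zero_rpow (by intro h; rw [show α + β - 2 + 1 = α + β - 1 by ring] at h; linarith)]
    have : α + β - 2 + 1 = α + β - 1 := by ring
    rw [this, sub_zero]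
  -- comparison
  have hIJ : I ≤ ∫ s in a..m, (m - s) ^ (α + β - 2) := by
    rw [hI, intervalIntegral.integral_of_le ham, intervalIntegral.integral_of_le ham,
      ← Measure.restrict_congr_set Ioo_ae_eq_Ioc]
    apply integral_mono_of_nonneg
    · refine (ae_restrict_iff' measurableSet_Ioo).2 (Filter.Eventually.of_forall fun s hs => ?_)
      exact mul_nonneg (Real.rpow_nonneg (by nlinarith [hs.2, hmt] : (0:ℝ) ≤ t - s) _)
        (Real.rpow_nonneg (by nlinarith [hs.2, hmr] : (0:ℝ) ≤ r - s) _)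
    · have := (intervalIntegrable_iff_integrableOn_Ioc_of_le ham).mp hgint
      exact this.mono_set Ioo_subset_Ioc_self
    · refine (ae_restrict_iff' measurableSet_Ioo).2 (Filter.Eventually.of_forall fun s hs => ?_)
      obtain ⟨hs1', hs2'⟩ := hs
      have h1 : 0 < m - s := by linarith
      have h2 : m - s ≤ t - s := by linarith
      have h3 : m - s ≤ r - s := by linarith
      calc (t - s) ^ (β - 1) * (r - s) ^ (α - 1)
          ≤ (m - s) ^ (β - 1) * (m - s) ^ (α - 1) :=
            mul_le_mul (Real.rpow_le_rpow_of_nonpos h1 h2 (by linarith))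
              (Real.rpow_le_rpow_of_nonpos h1 h3 (by linarith))
              (Real.rpow_nonneg (by linarith) _) (Real.rpow_nonneg h1.le _)
        _ = (m - s) ^ (α + β - 2) := by
            rw [← Real.rpow_add h1]; congr 1; ring
  have hIK : I ≤ (b - a) ^ (α + β - 1) / (α + β - 1) := by
    refine hIJ.trans ?_
    rw [hcalc]
    gcongr
  have hGnn : 0 ≤ G a α β t r := by
    unfold G
    exact mul_nonneg (by positivity) hInn
  rw [abs_of_nonneg hGnn]
  unfold G
  calc (1 / (Real.Gamma α * Real.Gamma β)) * I
      ≤ (1 / (Real.Gamma α * Real.Gamma β)) * ((b - a) ^ (α + β - 1) / (α + β - 1)) := by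
        exact mul_le_mul_of_nonneg_left hIK (by positivity)
    _ = (b - a) ^ (α + β - 1) / ((α + β - 1) * Real.Gamma α * Real.Gamma β) := by
        field_simp

theorem stmt_11 (a b α β : ℝ) (hα0 : 0 < α) (hα1 : α ≤ 1) (hβ0 : 0 < β) (hβ1 : β ≤ 1)
    (hs1 : 1 < α + β) (hs2 : α + β ≤ 2) (hab : a < b)
    (q u : ℝ → ℝ) (hq : ContinuousOn q (Icc a b)) (hu : ContinuousOn u (Icc a b))
    (heq : ∀ t ∈ Icc a b, u t = ∫ r in a..b, G a α β t r * q r * u r)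
    (M : ℝ) (hM : IsGreatest ((fun t => |u t|) '' Icc a b) M) :
    M ≤ (b - a) ^ (α + β - 1) / ((α + β - 1) * Real.Gamma α * Real.Gamma β) * M *
      ∫ r in a..b, |q r| := by
  set K : ℝ := (b - a) ^ (α + β - 1) / ((α + β - 1) * Real.Gamma α * Real.Gamma β) with hKdef
  obtain ⟨t₀, ht₀, hut₀⟩ := hM.1
  have hMnn : 0 ≤ M := hut₀ ▸ abs_nonneg _
  have hub : ∀ r ∈ Icc a b, |u r| ≤ M := fun r hr => hM.2 ⟨r, hr, rfl⟩
  have hKnn : 0 ≤ K := by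
    have := G_abs_le a b α β hα0 hα1 hβ0 hβ1 hs1 hs2 ht₀ ht₀
    exact (abs_nonneg _).trans this
  calc M = |u t₀| := hut₀.symm
    _ = |∫ r in a..b, G a α β t₀ r * q r * u r| := by rw [heq t₀ ht₀]
    _ ≤ ∫ r in a..b, |G a α β t₀ r * q r * u r| :=
        intervalIntegral.abs_integral_le_integral_abs hab.le
    _ ≤ ∫ r in a..b, K * M * |q r| := by
        rw [intervalIntegral.integral_of_le hab.le, intervalIntegral.integral_of_le hab.le]
        apply integral_mono_of_nonneg
        · exact Filter.Eventually.of_forall fun r => abs_nonneg _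
        · exact (((hq.abs.integrableOn_Icc).mono_set Ioc_subset_Icc_self).const_mul (K * M))
        · refine (ae_restrict_iff' measurableSet_Ioc).2
            (Filter.Eventually.of_forall fun r hr => ?_)
          have hrI : r ∈ Icc a b := ⟨hr.1.le, hr.2⟩
          have h1 : |G a α β t₀ r| ≤ K :=
            G_abs_le a b α β hα0 hα1 hβ0 hβ1 hs1 hs2 ht₀ hrI
          have h2 : |u r| ≤ M := hub r hrI
          calc |G a α β t₀ r * q r * u r|
              = |G a α β t₀ r| * (|q r| * |u r|) := by rw [abs_mul, abs_mul, mul_assoc]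
            _ ≤ K * (|q r| * M) :=
                mul_le_mul h1 (mul_le_mul_of_nonneg_left h2 (abs_nonneg _))
                  (by positivity) hKnn
            _ = K * M * |q r| := by ring
    _ = K * M * ∫ r in a..b, |q r| := intervalIntegral.integral_const_mul _ _
end

section
/- Let 0 < α, β ≤ 1 with 1 < α + β ≤ 2, a < b, λ ∈ ℝ with |λ| < (α+β-1)Γ(α)Γ(β)/(b-a)^{α+β}. Then the only continuous function u : [a,b] → ℝ satisfying u(t) = λ ∫_a^b G(t,r) u(r) dr for all t ∈ [a,b] is u ≡ 0, where G(t,r) = (1/(Γ(α)Γ(β))) ∫_a^{min(t,r)} (t-s)^{β-1}(r-s)^{α-1} ds. -/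
open Real MeasureTheory Set

lemma G_nonneg' (a α β t r : ℝ) (hα0 : 0 < α) (hβ0 : 0 < β) (hat : a ≤ t) (har : a ≤ r) :
    0 ≤ G a α β t r := by
  have hΓα := Real.Gamma_pos_of_pos hα0
  have hΓβ := Real.Gamma_pos_of_pos hβ0
  refine mul_nonneg (by positivity) ?_
  refine intervalIntegral.integral_nonneg (le_min hat har) fun s hs => ?_
  have h1 : (0:ℝ) ≤ t - s := by
    have := hs.2; have := min_le_left t r; linarith [le_trans hs.2 (min_le_left t r)]
  have h2 : (0:ℝ) ≤ r - s := by linarith [le_trans hs.2 (min_le_right t r)]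
  exact mul_nonneg (Real.rpow_nonneg h1 _) (Real.rpow_nonneg h2 _)

lemma G_le' (a b α β t r : ℝ) (hα0 : 0 < α) (hα1 : α ≤ 1) (hβ0 : 0 < β) (hβ1 : β ≤ 1)
    (hs1 : 1 < α + β) (ht : t ∈ Icc a b) (hr : r ∈ Icc a b) :
    G a α β t r ≤ (b - a) ^ (α + β - 1) / ((α + β - 1) * Real.Gamma α * Real.Gamma β) := by
  have ham : a ≤ min t r := le_min ht.1 hr.1
  have hmt : min t r ≤ t := min_le_left _ _
  have hmr : min t r ≤ r := min_le_right _ _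
  have hmb : min t r ≤ b := hmt.trans ht.2
  set m := min t r with hm
  have hp : (-1:ℝ) < α + β - 2 := by linarith
  have hΓα := Real.Gamma_pos_of_pos hα0
  have hΓβ := Real.Gamma_pos_of_pos hβ0
  have hg_int : IntervalIntegrable (fun s => (m - s) ^ (α + β - 2)) volume a m := by
    have := (intervalIntegral.intervalIntegrable_rpow' hp (a := m - a) (b := 0)).comp_sub_left m
    simpa using this
  have hg_val : (∫ s in a..m, (m - s) ^ (α + β - 2))
      = (m - a) ^ (α + β - 1) / (α + β - 1) := by
    rw [intervalIntegral.integral_comp_sub_left (fun x => x ^ (α + β - 2)) m]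
    rw [sub_self, integral_rpow (Or.inl hp)]
    rw [show α + β - 2 + 1 = α + β - 1 by ring, Real.zero_rpow (by linarith)]
    ring
  have hIle : (∫ s in a..m, (t - s) ^ (β - 1) * (r - s) ^ (α - 1))
      ≤ (m - a) ^ (α + β - 1) / (α + β - 1) := by
    rw [← hg_val]
    by_cases hint : IntervalIntegrable
        (fun s => (t - s) ^ (β - 1) * (r - s) ^ (α - 1)) volume a m
    · refine intervalIntegral.integral_mono_ae_restrict ham hint hg_int ?_
      have hne : ∀ᵐ s ∂(volume : Measure ℝ), s ≠ m := by
        rw [ae_iff]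
        simpa using Real.volume_singleton (a := m)
      filter_upwards [ae_restrict_of_ae hne, ae_restrict_mem measurableSet_Icc]
        with s hs hsIcc
      have hsm : s < m := lt_of_le_of_ne hsIcc.2 hs
      have h0 : 0 < m - s := by linarith
      have h1 : (t - s) ^ (β - 1) ≤ (m - s) ^ (β - 1) :=
        Real.rpow_le_rpow_of_nonpos h0 (by linarith) (by linarith)
      have h2 : (r - s) ^ (α - 1) ≤ (m - s) ^ (α - 1) :=
        Real.rpow_le_rpow_of_nonpos h0 (by linarith) (by linarith)
      calc (t - s) ^ (β - 1) * (r - s) ^ (α - 1)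
          ≤ (m - s) ^ (β - 1) * (m - s) ^ (α - 1) :=
            mul_le_mul h1 h2 (Real.rpow_nonneg (by linarith) _) (Real.rpow_nonneg h0.le _)
        _ = (m - s) ^ (α + β - 2) := by
            rw [← Real.rpow_add h0]; ring_nf
    · rw [intervalIntegral.integral_undef hint, hg_val]
      exact div_nonneg (Real.rpow_nonneg (by linarith) _) (by linarith)
  have h1p : (0:ℝ) ≤ 1 / (Real.Gamma α * Real.Gamma β) := by positivity
  have hmono : (m - a) ^ (α + β - 1) ≤ (b - a) ^ (α + β - 1) :=
    Real.rpow_le_rpow (by linarith) (by linarith) (by linarith)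
  calc G a α β t r
      ≤ (1 / (Real.Gamma α * Real.Gamma β)) * ((b - a) ^ (α + β - 1) / (α + β - 1)) := by
        exact mul_le_mul_of_nonneg_left
          (hIle.trans (div_le_div_of_nonneg_right hmono (by linarith))) h1p
    _ = (b - a) ^ (α + β - 1) / ((α + β - 1) * Real.Gamma α * Real.Gamma β) := by
        field_simp

theorem stmt_13 (a b α β lam : ℝ) (hα0 : 0 < α) (hα1 : α ≤ 1) (hβ0 : 0 < β) (hβ1 : β ≤ 1)
    (hs1 : 1 < α + β) (hs2 : α + β ≤ 2) (hab : a < b)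
    (hlam : |lam| < (α + β - 1) * Real.Gamma α * Real.Gamma β / (b - a) ^ (α + β))
    (u : ℝ → ℝ) (hu : ContinuousOn u (Icc a b))
    (heq : ∀ t ∈ Icc a b, u t = lam * ∫ r in a..b, G a α β t r * u r) :
    ∀ t ∈ Icc a b, u t = 0 := by
  have hΓα := Real.Gamma_pos_of_pos hα0
  have hΓβ := Real.Gamma_pos_of_pos hβ0
  set P := (α + β - 1) * Real.Gamma α * Real.Gamma β with hP
  have hPpos : 0 < P := mul_pos (mul_pos (by linarith) hΓα) hΓβ
  have hba : (0:ℝ) < b - a := by linarith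
  set C0 := (b - a) ^ (α + β - 1) / P with hC0
  have hC0pos : 0 < C0 := div_pos (Real.rpow_pos_of_pos hba _) hPpos
  obtain ⟨t0, ht0, hmax⟩ := (isCompact_Icc (a := a) (b := b)).exists_isMaxOn
    ⟨a, left_mem_Icc.2 hab.le⟩ hu.abs
  have hMle : ∀ s ∈ Icc a b, |u s| ≤ |u t0| := fun s hs => hmax hs
  set M := |u t0| with hMdef
  have hM0 : 0 ≤ M := abs_nonneg _
  suffices hM : M ≤ 0 by
    intro t htI
    have := (hMle t htI).trans hM
    exact abs_nonpos_iff.mp this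
  by_contra hMneg
  push_neg at hMneg
  -- estimate
  have hbound : ∀ x ∈ Set.uIoc a b, ‖G a α β t0 x * u x‖ ≤ C0 * M := by
    intro x hx
    rw [uIoc_of_le hab.le] at hx
    have hxI : x ∈ Icc a b := ⟨hx.1.le, hx.2⟩
    have hG0 : 0 ≤ G a α β t0 x := G_nonneg' a α β t0 x hα0 hβ0 ht0.1 hxI.1
    have hGle : G a α β t0 x ≤ C0 :=
      G_le' a b α β t0 x hα0 hα1 hβ0 hβ1 hs1 ht0 hxI
    rw [Real.norm_eq_abs, abs_mul, abs_of_nonneg hG0]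
    exact mul_le_mul hGle (hMle x hxI) (abs_nonneg _) hC0pos.le
  have hint := intervalIntegral.norm_integral_le_of_norm_le_const hbound
  have hestep : M ≤ |lam| * (C0 * M * (b - a)) := by
    have h1 : M = |lam| * ‖∫ r in a..b, G a α β t0 r * u r‖ := by
      rw [hMdef, heq t0 ht0, abs_mul, Real.norm_eq_abs]
    calc M = |lam| * ‖∫ r in a..b, G a α β t0 r * u r‖ := h1
      _ ≤ |lam| * (C0 * M * |b - a|) := mul_le_mul_of_nonneg_left hint (abs_nonneg _)
      _ = |lam| * (C0 * M * (b - a)) := by rw [abs_of_pos hba]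
  have hq : |lam| * (C0 * (b - a)) < 1 := by
    have hD : C0 * (b - a) = (b - a) ^ (α + β) / P := by
      rw [hC0, show α + β = (α + β - 1) + 1 by ring,
        Real.rpow_add_one (ne_of_gt hba)]
      field_simp
      ring_nf
    rw [hD]
    rw [lt_div_iff₀ (Real.rpow_pos_of_pos hba _)] at hlam
    rw [mul_div_assoc', div_lt_one hPpos]
    linarith
  have : M < M := by
    calc M ≤ |lam| * (C0 * M * (b - a)) := hestep
      _ = (|lam| * (C0 * (b - a))) * M := by ring
      _ < 1 * M := by exact mul_lt_mul_of_pos_right hq hMneg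
      _ = M := one_mul M
  exact lt_irrefl M this
end
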